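/- Let p_1, p_2, p_3, p_4 ≥ 0 with p_1 + p_2 + p_3 + p_4 = 1 and let W be the binary input symmetric quaternary output kernel. Let X be a random variable with finitely many values, Y a random variable taking finitely many values in lists over {0,1}, and Y^(4) a random variable taking values in lists over {0⁻,0⁺,1⁻,1⁺} with |Y^(4)| = |Y| pointwise, such that P(Y^(4)=y′ | X=x, Y=y) = ∏_{i=1}^{|y|} W(y_i, y′_i) whenever P(X=x, Y=y) > 0 and |y′| = |y|. Then I(X; Y^(4)) ≥ I(X; Y) − E[|Y|] · [ H(p_1,p_2,p_3,p_4) + log₂((p_1+p_3)² + (p_2+p_4)²) ], where H(p_1,p_2,p_3,p_4) = −∑_{i=1}^4 p_i log₂ p_i. -/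

import Mathlib

open scoped BigOperators
open Classical

noncomputable section

/-- A finite probability space: a probability mass function on a finite type. -/
structure FinProb (Ω : Type*) [Fintype Ω] where
  p : Ω → ℝ
  nonneg : ∀ ω, 0 ≤ p ω
  sum_one : ∑ ω, p ω = 1

variable {Ω : Type*} [Fintype Ω]

/-- Probability of an event. -/
def pr (μ : FinProb Ω) (E : Ω → Prop) : ℝ :=
  ∑ ω, if E ω then μ.p ω else 0

/-- Shannon entropy (base 2) of a random variable with finitely many values. -/
def entropy {S : Type*} (μ : FinProb Ω) (U : Ω → S) : ℝ :=
  -∑ u ∈ Finset.univ.image U,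
    pr μ (fun ω => U ω = u) * Real.logb 2 (pr μ (fun ω => U ω = u))

/-- Conditional Shannon entropy `H(U | V)`. -/
def condEntropy {S T : Type*} (μ : FinProb Ω) (U : Ω → S) (V : Ω → T) : ℝ :=
  ∑ v ∈ (Finset.univ.image V).filter (fun v => 0 < pr μ (fun ω => V ω = v)),
    pr μ (fun ω => V ω = v) *
      (-∑ u ∈ Finset.univ.image U,
        (pr μ (fun ω => U ω = u ∧ V ω = v) / pr μ (fun ω => V ω = v)) *
          Real.logb 2 (pr μ (fun ω => U ω = u ∧ V ω = v) / pr μ (fun ω => V ω = v)))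

/-- Mutual information `I(U;V) = H(U) - H(U|V)`. -/
def mutualInfo {S T : Type*} (μ : FinProb Ω) (U : Ω → S) (V : Ω → T) : ℝ :=
  entropy μ U - condEntropy μ U V

/-- Expected length of a list-valued random variable. -/
def expLen {A : Type*} (μ : FinProb Ω) (Y : Ω → List A) : ℝ :=
  ∑ ω, μ.p ω * (Y ω).length

/-- The binary input symmetric quaternary output kernel. Input alphabet `{0,1}` is `Bool`;
the output alphabet `{0⁻,0⁺,1⁻,1⁺}` is modeled as `Bool × Bool`, where `(c, s)` denotes
`c⁻` when `s = false` and `c⁺` when `s = true`: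
`W b b⁻ = p1`, `W b b⁺ = p2`, `W b (1-b)⁻ = p3`, `W b (1-b)⁺ = p4`. -/
def quatKernel (p1 p2 p3 p4 : ℝ) : Bool → Bool × Bool → ℝ :=
  fun b k => if k.1 = b then (if k.2 then p2 else p1) else (if k.2 then p4 else p3)

section Aux

variable {S T : Type*} (μ : FinProb Ω)

lemma pr_nonneg (E : Ω → Prop) : 0 ≤ pr μ E := by
  apply Finset.sum_nonneg
  intro ω _
  split <;> simp [μ.nonneg ω]

lemma pr_congr {E F : Ω → Prop} (h : ∀ ω, E ω ↔ F ω) : pr μ E = pr μ F := by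
  unfold pr
  exact Finset.sum_congr rfl fun ω _ => by rw [if_congr (h ω) rfl rfl]

lemma pr_eq_zero {E : Ω → Prop} (h : ∀ ω, ¬ E ω) : pr μ E = 0 := by
  unfold pr
  simp [h]

lemma pr_mono {E F : Ω → Prop} (h : ∀ ω, E ω → F ω) : pr μ E ≤ pr μ F := by
  apply Finset.sum_le_sum
  intro ω _
  by_cases hE : E ω
  · simp [hE, h ω hE]
  · simp only [if_neg hE]
    split <;> simp [μ.nonneg ω]

lemma pr_pos_of {E : Ω → Prop} (ω : Ω) (hω : 0 < μ.p ω) (hE : E ω) : 0 < pr μ E := by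
  have h1 : μ.p ω ≤ pr μ E := by
    have := Finset.single_le_sum (f := fun ω' => if E ω' then μ.p ω' else 0)
      (fun i _ => by split <;> simp [μ.nonneg i]) (Finset.mem_univ ω)
    simpa [if_pos hE, pr] using this
  linarith

lemma sum_partition (V : Ω → T) (g : Ω → ℝ) :
    ∑ ω, g ω = ∑ v ∈ Finset.univ.image V, ∑ ω, if V ω = v then g ω else 0 := by
  rw [Finset.sum_comm]
  apply Finset.sum_congr rfl
  intro ω _
  rw [Finset.sum_ite_eq (Finset.univ.image V) (V ω) (fun _ => g ω)]
  simp

lemma sum_partition_pr (V : Ω → T) (g : Ω → ℝ) (h : T → ℝ)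
    (hclass : ∀ v, (∑ ω, if V ω = v then g ω else 0) = pr μ (fun ω => V ω = v) * h v) :
    ∑ ω, g ω = ∑ v ∈ Finset.univ.image V, pr μ (fun ω => V ω = v) * h v := by
  rw [sum_partition V g]
  exact Finset.sum_congr rfl (fun v _ => hclass v)

lemma grp (V : Ω → T) (f : T → ℝ) :
    ∑ ω, μ.p ω * f (V ω) = ∑ v ∈ Finset.univ.image V, pr μ (fun ω => V ω = v) * f v := by
  rw [sum_partition V (fun ω => μ.p ω * f (V ω))]
  apply Finset.sum_congr rfl
  intro v _
  unfold pr
  rw [Finset.sum_mul]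
  apply Finset.sum_congr rfl
  intro ω _
  by_cases h : V ω = v
  · rw [if_pos h, if_pos h, h]
  · simp [h]

lemma pr_decomp (X : Ω → S) (V : Ω → T) (v : T) :
    pr μ (fun ω => V ω = v) = ∑ x ∈ Finset.univ.image X, pr μ (fun ω => X ω = x ∧ V ω = v) := by
  unfold pr
  rw [Finset.sum_comm]
  apply Finset.sum_congr rfl
  intro ω _
  by_cases h : V ω = v
  · rw [if_pos h]
    simp [h]
  · rw [if_neg h]
    symm
    apply Finset.sum_eq_zero
    intro x _
    simp [h]

lemma omega_sum_eq (X : Ω → S) (V : Ω → T) (f : S → T → ℝ) :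
    ∑ ω, μ.p ω * f (X ω) (V ω) =
      ∑ v ∈ Finset.univ.image V, ∑ x ∈ Finset.univ.image X,
        pr μ (fun ω => X ω = x ∧ V ω = v) * f x v := by
  rw [sum_partition V (fun ω => μ.p ω * f (X ω) (V ω))]
  apply Finset.sum_congr rfl
  intro v _
  rw [sum_partition X (fun ω => if V ω = v then μ.p ω * f (X ω) (V ω) else 0)]
  apply Finset.sum_congr rfl
  intro x _
  unfold pr
  rw [Finset.sum_mul]
  apply Finset.sum_congr rfl
  intro ω _
  by_cases hx : X ω = x
  · by_cases hv : V ω = v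
    · simp [hx, hv]
    · simp [hx, hv]
  · by_cases hv : V ω = v <;> simp [hx, hv]

end Aux
section Part2

variable {S T : Type*} (μ : FinProb Ω)

lemma pr_and_le (X : Ω → S) (V : Ω → T) (x : S) (v : T) :
    pr μ (fun ω => X ω = x ∧ V ω = v) ≤ pr μ (fun ω => V ω = v) :=
  pr_mono μ (fun ω h => h.2)

lemma pr_witness {E : Ω → Prop} (h : 0 < pr μ E) : ∃ ω, 0 < μ.p ω ∧ E ω := by
  by_contra hc
  push_neg at hc
  have : pr μ E = 0 := by
    apply Finset.sum_eq_zero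
    intro ω _
    by_cases hE : E ω
    · rw [if_pos hE]
      rcases lt_or_eq_of_le (μ.nonneg ω) with h' | h'
      · exact absurd hE (by simpa using hc ω h')
      · exact h'.symm
    · rw [if_neg hE]
  rw [this] at h
  exact lt_irrefl 0 h

lemma condEntropy_expand (X : Ω → S) (V : Ω → T) :
    condEntropy μ X V =
      ∑ v ∈ (Finset.univ.image V).filter (fun v => 0 < pr μ (fun ω => V ω = v)),
        ∑ x ∈ Finset.univ.image X,
          pr μ (fun ω => X ω = x ∧ V ω = v) *
            (-Real.logb 2 (pr μ (fun ω => X ω = x ∧ V ω = v) / pr μ (fun ω => V ω = v))) := by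
  unfold condEntropy
  apply Finset.sum_congr rfl
  intro v hv
  rw [Finset.mem_filter] at hv
  have hpv : pr μ (fun ω => V ω = v) ≠ 0 := ne_of_gt hv.2
  rw [mul_neg, Finset.mul_sum, ← Finset.sum_neg_distrib]
  apply Finset.sum_congr rfl
  intro x _
  rw [← mul_assoc, mul_comm (pr μ fun ω => V ω = v)
      ((pr μ fun ω => X ω = x ∧ V ω = v) / pr μ fun ω => V ω = v),
    div_mul_cancel₀ _ hpv, ← mul_neg]

lemma condEntropy_eq_sum (X : Ω → S) (V : Ω → T) :
    condEntropy μ X V = ∑ ω, μ.p ω *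
      (-Real.logb 2 (pr μ (fun ω' => X ω' = X ω ∧ V ω' = V ω) /
        pr μ (fun ω' => V ω' = V ω))) := by
  rw [omega_sum_eq μ X V
    (fun x v => -Real.logb 2 (pr μ (fun ω => X ω = x ∧ V ω = v) / pr μ (fun ω => V ω = v))),
    condEntropy_expand μ X V]
  apply Finset.sum_subset (Finset.filter_subset _ _)
  intro v hv hnv
  rw [Finset.mem_filter, not_and] at hnv
  have hpv : pr μ (fun ω => V ω = v) = 0 := by
    rcases lt_or_eq_of_le (pr_nonneg μ (fun ω => V ω = v)) with h | h
    · exact absurd h (hnv hv)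
    · exact h.symm
  apply Finset.sum_eq_zero
  intro x _
  have h0 : pr μ (fun ω => X ω = x ∧ V ω = v) = 0 :=
    le_antisymm (hpv ▸ pr_and_le μ X V x v) (pr_nonneg μ _)
  rw [h0, zero_mul]

lemma gibbs (X : Ω → S) (V : Ω → T) (Q : S → T → ℝ)
    (hQ0 : ∀ x v, 0 ≤ Q x v)
    (hQ1 : ∀ v, 0 < pr μ (fun ω => V ω = v) → ∑ x ∈ Finset.univ.image X, Q x v ≤ 1)
    (hQpos : ∀ ω, 0 < μ.p ω → 0 < Q (X ω) (V ω)) :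
    condEntropy μ X V ≤ ∑ ω, μ.p ω * (-Real.logb 2 (Q (X ω) (V ω))) := by
  have hlog2 : (0:ℝ) < Real.log 2 := Real.log_pos (by norm_num)
  rw [omega_sum_eq μ X V (fun x v => -Real.logb 2 (Q x v)), condEntropy_expand μ X V]
  have hzero : ∀ v ∈ Finset.univ.image V,
      v ∉ (Finset.univ.image V).filter (fun v => 0 < pr μ (fun ω => V ω = v)) →
      (∑ x ∈ Finset.univ.image X,
        pr μ (fun ω => X ω = x ∧ V ω = v) * (-Real.logb 2 (Q x v))) = 0 := by
    intro v hv hnv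
    rw [Finset.mem_filter, not_and] at hnv
    have hpv : pr μ (fun ω => V ω = v) = 0 := by
      rcases lt_or_eq_of_le (pr_nonneg μ (fun ω => V ω = v)) with h | h
      · exact absurd h (hnv hv)
      · exact h.symm
    apply Finset.sum_eq_zero
    intro x _
    have h0 : pr μ (fun ω => X ω = x ∧ V ω = v) = 0 :=
      le_antisymm (hpv ▸ pr_and_le μ X V x v) (pr_nonneg μ _)
    rw [h0, zero_mul]
  rw [← Finset.sum_subset (Finset.filter_subset _ _) hzero]
  apply Finset.sum_le_sum
  intro v hv
  rw [Finset.mem_filter] at hv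
  have hpv := hv.2
  have hpv0 : pr μ (fun ω => V ω = v) ≠ 0 := ne_of_gt hpv
  have key : ∀ x ∈ Finset.univ.image X,
      (pr μ (fun ω => X ω = x ∧ V ω = v) - pr μ (fun ω => V ω = v) * Q x v) / Real.log 2
      ≤ pr μ (fun ω => X ω = x ∧ V ω = v) * (-Real.logb 2 (Q x v))
        - pr μ (fun ω => X ω = x ∧ V ω = v) *
            (-Real.logb 2 (pr μ (fun ω => X ω = x ∧ V ω = v) / pr μ (fun ω => V ω = v))) := by
    intro x _
    set pxv := pr μ (fun ω => X ω = x ∧ V ω = v) with hpxv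
    set pv := pr μ (fun ω => V ω = v) with hpvdef
    rcases lt_or_eq_of_le (pr_nonneg μ (fun ω => X ω = x ∧ V ω = v)) with hx | hx
    · -- pxv > 0
      rw [← hpxv] at hx
      obtain ⟨ω, hω, hE⟩ := pr_witness μ (show 0 < pr μ (fun ω => X ω = x ∧ V ω = v) from hx)
      have hQx : 0 < Q x v := by
        have := hQpos ω hω
        rwa [hE.1, hE.2] at this
      have hr : 0 < pxv / pv := div_pos hx hpv
      have hz : 0 < Q x v / (pxv / pv) := div_pos hQx hr
      have step1 : pxv * (-Real.logb 2 (Q x v)) - pxv * (-Real.logb 2 (pxv / pv))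
          = -(pxv * Real.logb 2 (Q x v / (pxv / pv))) := by
        rw [Real.logb_div (ne_of_gt hQx) (ne_of_gt hr)]
        ring
      have hmain : pxv * Real.logb 2 (Q x v / (pxv / pv)) ≤ (pv * Q x v - pxv) / Real.log 2 := by
        have hlb : Real.logb 2 (Q x v / (pxv / pv)) ≤ (Q x v / (pxv / pv) - 1) / Real.log 2 := by
          rw [Real.logb]
          exact (div_le_div_iff_of_pos_right hlog2).mpr (Real.log_le_sub_one_of_pos hz)
        have h2 := mul_le_mul_of_nonneg_left hlb (le_of_lt hx)
        have h3 : pxv * ((Q x v / (pxv / pv) - 1) / Real.log 2)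
            = (pv * Q x v - pxv) / Real.log 2 := by
          field_simp
        linarith
      have hneg : (pxv - pv * Q x v) / Real.log 2 = -((pv * Q x v - pxv) / Real.log 2) := by
        ring
      rw [step1, hneg]
      exact neg_le_neg hmain
    · -- pxv = 0
      have hx0 : pxv = 0 := by rw [hpxv, ← hx]
      rw [hx0]
      simp only [zero_mul, zero_sub, sub_zero]
      apply div_nonpos_of_nonpos_of_nonneg _ hlog2.le
      have := mul_nonneg hpv.le (hQ0 x v)
      linarith
  rw [← sub_nonneg, ← Finset.sum_sub_distrib]
  calc (0:ℝ)
      ≤ (pr μ (fun ω => V ω = v) - pr μ (fun ω => V ω = v)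
          * ∑ x ∈ Finset.univ.image X, Q x v) / Real.log 2 := by
        apply div_nonneg _ hlog2.le
        nlinarith [hQ1 v hpv, hpv]
    _ = ∑ x ∈ Finset.univ.image X,
        (pr μ (fun ω => X ω = x ∧ V ω = v) - pr μ (fun ω => V ω = v) * Q x v) / Real.log 2 := by
        rw [← Finset.sum_div, Finset.sum_sub_distrib, ← Finset.mul_sum, ← pr_decomp μ X V v]
    _ ≤ _ := Finset.sum_le_sum key

end Part2
section Part3

lemma list_sum_map_eq {A : Type*} [Fintype A] [DecidableEq A] (L : List A) (g : A → ℝ) :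
    (L.map g).sum = ∑ a, (L.map (fun p => if p = a then (1:ℝ) else 0)).sum * g a := by
  induction L with
  | nil => simp
  | cons hd tl ih =>
    simp only [List.map_cons, List.sum_cons, ih, add_mul, Finset.sum_add_distrib]
    congr 1
    rw [Finset.sum_congr rfl (fun a _ => by
      show (if hd = a then (1:ℝ) else 0) * g a = if hd = a then g a else 0
      split <;> simp_all)]
    rw [Finset.sum_ite_eq Finset.univ hd g]
    simp

lemma zip_ofFn {α β : Type*} : ∀ {n : ℕ} (f : Fin n → α) (g : Fin n → β),
    (List.ofFn f).zip (List.ofFn g) = List.ofFn (fun i => (f i, g i)) := by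
  intro n
  induction n with
  | zero => intro f g; simp
  | succ m ih =>
    intro f g
    rw [List.ofFn_succ, List.ofFn_succ, List.zip_cons_cons, ih, List.ofFn_succ]

lemma list_logb_prod : ∀ (L : List ℝ), (∀ x ∈ L, 0 < x) →
    Real.logb 2 L.prod = (L.map (Real.logb 2)).sum := by
  intro L
  induction L with
  | nil => intro _; simp
  | cons hd tl ih =>
    intro h
    have hhd : 0 < hd := h hd List.mem_cons_self
    have htl : 0 < tl.prod := List.prod_pos (fun x hx => h x (List.mem_cons_of_mem hd hx))
    rw [List.prod_cons, Real.logb_mul (ne_of_gt hhd) (ne_of_gt htl), List.map_cons,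
      List.sum_cons, ih (fun x hx => h x (List.mem_cons_of_mem hd hx))]

lemma bool_count : ∀ (L : List Bool),
    (L.map (fun a => if a = false then (1:ℝ) else 0)).sum
      + (L.map (fun a => if a = true then (1:ℝ) else 0)).sum = L.length := by
  intro L
  induction L with
  | nil => simp
  | cons hd tl ih =>
    simp only [List.map_cons, List.sum_cons, List.length_cons]
    push_cast
    cases hd <;> simp <;> linarith

lemma list_eq_ofFn {α : Type*} (l : List α) {n : ℕ} (h : l.length = n) :
    ∃ f : Fin n → α, l = List.ofFn f := by
  subst h
  exact ⟨fun i => l[(i : ℕ)], List.ofFn_getElem.symm⟩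

lemma helperH2 (a c : ℝ) (ha : 0 ≤ a) (hc : 0 ≤ c) :
    a * (-Real.logb 2 (a / (a + c))) + c * (-Real.logb 2 (c / (a + c)))
      = -(a * Real.logb 2 a) - c * Real.logb 2 c + (a + c) * Real.logb 2 (a + c) := by
  rcases eq_or_lt_of_le ha with ha0 | ha0
  · rcases eq_or_lt_of_le hc with hc0 | hc0
    · simp [← ha0, ← hc0]
    · rw [← ha0]
      have h1 : c / (0 + c) = 1 := by rw [zero_add, div_self (ne_of_gt hc0)]
      rw [h1, Real.logb_one, zero_add]
      ring
  · rcases eq_or_lt_of_le hc with hc0 | hc0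
    · rw [← hc0]
      have h1 : a / (a + 0) = 1 := by rw [add_zero, div_self (ne_of_gt ha0)]
      rw [h1, Real.logb_one, add_zero]
      ring
    · have hac : 0 < a + c := by linarith
      rw [Real.logb_div (ne_of_gt ha0) (ne_of_gt hac),
        Real.logb_div (ne_of_gt hc0) (ne_of_gt hac)]
      ring

lemma amgm (u v : ℝ) (hu : 0 ≤ u) (hv : 0 ≤ v) (huv : u + v = 1) :
    u * Real.logb 2 u + v * Real.logb 2 v ≤ Real.logb 2 (u ^ 2 + v ^ 2) := by
  rcases eq_or_lt_of_le hu with hu0 | hu0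
  · have hv1 : v = 1 := by linarith
    rw [← hu0, hv1]
    simp
  · rcases eq_or_lt_of_le hv with hv0 | hv0
    · have hu1 : u = 1 := by linarith
      rw [← hv0, hu1]
      simp
    · have hgm : u ^ (u:ℝ) * v ^ (v:ℝ) ≤ u * u + v * v :=
        Real.geom_mean_le_arith_mean2_weighted hu hv hu hv huv
      have hupos : 0 < u ^ (u:ℝ) := Real.rpow_pos_of_pos hu0 _
      have hvpos : 0 < v ^ (v:ℝ) := Real.rpow_pos_of_pos hv0 _
      have h1 : Real.logb 2 (u ^ (u:ℝ) * v ^ (v:ℝ)) ≤ Real.logb 2 (u ^ 2 + v ^ 2) := by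
        apply (Real.logb_le_logb (by norm_num) (mul_pos hupos hvpos) (by positivity)).mpr
        calc u ^ (u:ℝ) * v ^ (v:ℝ) ≤ u * u + v * v := hgm
          _ = u ^ 2 + v ^ 2 := by ring
      have h2 : Real.logb 2 (u ^ (u:ℝ)) = u * Real.logb 2 u := by
        rw [Real.logb, Real.logb, Real.log_rpow hu0]
        ring
      have h3 : Real.logb 2 (v ^ (v:ℝ)) = v * Real.logb 2 v := by
        rw [Real.logb, Real.logb, Real.log_rpow hv0]
        ring
      calc u * Real.logb 2 u + v * Real.logb 2 v
          = Real.logb 2 (u ^ (u:ℝ) * v ^ (v:ℝ)) := by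
            rw [Real.logb_mul (ne_of_gt hupos) (ne_of_gt hvpos), h2, h3]
        _ ≤ Real.logb 2 (u ^ 2 + v ^ 2) := h1

end Part3
section Part4

variable {p1 p2 p3 p4 : ℝ}

def colsum (p1 p2 p3 p4 : ℝ) (k : Bool × Bool) : ℝ :=
  quatKernel p1 p2 p3 p4 false k + quatKernel p1 p2 p3 p4 true k

def qfun (p1 p2 p3 p4 : ℝ) (a : Bool × (Bool × Bool)) : ℝ :=
  quatKernel p1 p2 p3 p4 a.1 a.2 / colsum p1 p2 p3 p4 a.2

variable (h1 : 0 ≤ p1) (h2 : 0 ≤ p2) (h3 : 0 ≤ p3) (h4 : 0 ≤ p4)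
  (hsum : p1 + p2 + p3 + p4 = 1)

include h1 h2 h3 h4 in
lemma quat_nonneg (b : Bool) (k : Bool × Bool) : 0 ≤ quatKernel p1 p2 p3 p4 b k := by
  unfold quatKernel
  split_ifs <;> assumption

include h1 h2 h3 h4 in
lemma quat_le_colsum (b : Bool) (k : Bool × Bool) :
    quatKernel p1 p2 p3 p4 b k ≤ colsum p1 p2 p3 p4 k := by
  unfold colsum
  cases b
  · have := quat_nonneg h1 h2 h3 h4 (p1 := p1) (p2 := p2) (p3 := p3) (p4 := p4) true k
    linarith
  · have := quat_nonneg h1 h2 h3 h4 (p1 := p1) (p2 := p2) (p3 := p3) (p4 := p4) false k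
    linarith

include h1 h2 h3 h4 in
lemma colsum_nonneg (k : Bool × Bool) : 0 ≤ colsum p1 p2 p3 p4 k :=
  add_nonneg (quat_nonneg h1 h2 h3 h4 false k) (quat_nonneg h1 h2 h3 h4 true k)

include h1 h2 h3 h4 in
lemma qfun_nonneg (a : Bool × (Bool × Bool)) : 0 ≤ qfun p1 p2 p3 p4 a :=
  div_nonneg (quat_nonneg h1 h2 h3 h4 _ _) (colsum_nonneg h1 h2 h3 h4 _)

include h1 h2 h3 h4 in
lemma qfun_le_one (a : Bool × (Bool × Bool)) : qfun p1 p2 p3 p4 a ≤ 1 := by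
  unfold qfun
  rcases lt_or_eq_of_le (colsum_nonneg h1 h2 h3 h4 a.2) with hc | hc
  · rw [div_le_one hc]
    exact quat_le_colsum h1 h2 h3 h4 a.1 a.2
  · rw [← hc, div_zero]
    norm_num

include h1 h2 h3 h4 in
lemma qfun_pair_le_one (k : Bool × Bool) :
    qfun p1 p2 p3 p4 (true, k) + qfun p1 p2 p3 p4 (false, k) ≤ 1 := by
  have hq : qfun p1 p2 p3 p4 (true, k) + qfun p1 p2 p3 p4 (false, k)
      = (quatKernel p1 p2 p3 p4 true k + quatKernel p1 p2 p3 p4 false k)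
          / colsum p1 p2 p3 p4 k := by
    unfold qfun
    rw [← add_div]
  rw [hq]
  rcases lt_or_eq_of_le (colsum_nonneg h1 h2 h3 h4 k) with hc | hc
  · rw [div_le_one hc]
    unfold colsum
    linarith
  · rw [← hc, div_zero]
    norm_num

include hsum in
lemma quat_row_sum (b : Bool) : ∑ k : Bool × Bool, quatKernel p1 p2 p3 p4 b k = 1 := by
  rw [Fintype.sum_prod_type]
  cases b <;> simp [quatKernel, Fintype.sum_bool] <;> linarith

include h1 h2 h3 h4 in
lemma quat_D (b : Bool) :
    ∑ k : Bool × Bool, quatKernel p1 p2 p3 p4 b k * (-Real.logb 2 (qfun p1 p2 p3 p4 (b, k)))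
      = (-(p1 * Real.logb 2 p1) - p2 * Real.logb 2 p2 - p3 * Real.logb 2 p3
          - p4 * Real.logb 2 p4)
        + ((p1 + p3) * Real.logb 2 (p1 + p3) + (p2 + p4) * Real.logb 2 (p2 + p4)) := by
  have e1 := helperH2 p1 p3 h1 h3
  have e2 := helperH2 p2 p4 h2 h4
  have c31 : p3 + p1 = p1 + p3 := add_comm _ _
  have c42 : p4 + p2 = p2 + p4 := add_comm _ _
  rw [Fintype.sum_prod_type]
  cases b <;>
    simp only [qfun, colsum, quatKernel, Fintype.sum_bool, if_true, if_false] <;>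
    simp only [Bool.true_eq_false, Bool.false_eq_true, if_true, if_false, ite_true, ite_false] <;>
    rw [c31, c42] <;>
    linarith [e1, e2]

include h1 h2 h3 h4 hsum in
lemma quat_D_le :
    (-(p1 * Real.logb 2 p1) - p2 * Real.logb 2 p2 - p3 * Real.logb 2 p3
        - p4 * Real.logb 2 p4)
      + ((p1 + p3) * Real.logb 2 (p1 + p3) + (p2 + p4) * Real.logb 2 (p2 + p4))
    ≤ (-(p1 * Real.logb 2 p1) - p2 * Real.logb 2 p2 - p3 * Real.logb 2 p3
        - p4 * Real.logb 2 p4)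
      + Real.logb 2 ((p1 + p3) ^ 2 + (p2 + p4) ^ 2) := by
  have := amgm (p1 + p3) (p2 + p4) (by linarith) (by linarith) (by linarith)
  linarith

lemma list_sum_neg {A : Type*} (L : List A) (f : A → ℝ) :
    (L.map (fun a => -f a)).sum = -((L.map f).sum) := by
  induction L with
  | nil => simp
  | cons hd tl ih => simp [ih]; ring

end Part4
section Main

variable {S : Type*} (μ : FinProb Ω) (p1 p2 p3 p4 : ℝ)
  (X : Ω → S) (Y : Ω → List Bool) (Y4 : Ω → List (Bool × Bool))

def PcDef (μ : FinProb Ω) (X : Ω → S) (Y : Ω → List Bool) (x : S) (y : List Bool) : ℝ :=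
  pr μ (fun ω => X ω = x ∧ Y ω = y) / pr μ (fun ω => Y ω = y)

def QpDef (p1 p2 p3 p4 : ℝ) (y : List Bool) (v : List (Bool × Bool)) : ℝ :=
  if y.length = v.length then ((y.zip v).map (qfun p1 p2 p3 p4)).prod else 0

def QQDef (μ : FinProb Ω) (X : Ω → S) (Y : Ω → List Bool) (p1 p2 p3 p4 : ℝ)
    (x : S) (v : List (Bool × Bool)) : ℝ :=
  ∑ y ∈ Finset.univ.image Y, PcDef μ X Y x y * QpDef p1 p2 p3 p4 y v

variable (h1 : 0 ≤ p1) (h2 : 0 ≤ p2) (h3 : 0 ≤ p3) (h4 : 0 ≤ p4)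
  (hsum : p1 + p2 + p3 + p4 = 1)

include h1 h2 h3 h4 in
lemma QpDef_nonneg (y : List Bool) (v : List (Bool × Bool)) : 0 ≤ QpDef p1 p2 p3 p4 y v := by
  unfold QpDef
  split
  · apply List.prod_nonneg
    intro a ha
    rw [List.mem_map] at ha
    obtain ⟨c, _, rfl⟩ := ha
    exact qfun_nonneg h1 h2 h3 h4 c
  · exact le_refl 0

lemma PcDef_nonneg (x : S) (y : List Bool) : 0 ≤ PcDef μ X Y x y :=
  div_nonneg (pr_nonneg μ _) (pr_nonneg μ _)

include h1 h2 h3 h4 in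
lemma QQDef_nonneg (x : S) (v : List (Bool × Bool)) : 0 ≤ QQDef μ X Y p1 p2 p3 p4 x v :=
  Finset.sum_nonneg fun y _ =>
    mul_nonneg (PcDef_nonneg μ X Y x y) (QpDef_nonneg p1 p2 p3 p4 h1 h2 h3 h4 y v)

include h1 h2 h3 h4 in
lemma Qp_sum_le_one (n : ℕ) (wf : Fin n → Bool × Bool) (s : Finset (List Bool)) :
    ∑ y ∈ s.filter (fun y => y.length = n),
      ((y.zip (List.ofFn wf)).map (qfun p1 p2 p3 p4)).prod ≤ 1 := by
  classical
  have hnn : ∀ y : List Bool, 0 ≤ ((y.zip (List.ofFn wf)).map (qfun p1 p2 p3 p4)).prod := by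
    intro y
    apply List.prod_nonneg
    intro a ha
    rw [List.mem_map] at ha
    obtain ⟨c, _, rfl⟩ := ha
    exact qfun_nonneg h1 h2 h3 h4 c
  calc ∑ y ∈ s.filter (fun y => y.length = n),
        ((y.zip (List.ofFn wf)).map (qfun p1 p2 p3 p4)).prod
      ≤ ∑ y ∈ (Finset.univ : Finset (Fin n → Bool)).image List.ofFn,
        ((y.zip (List.ofFn wf)).map (qfun p1 p2 p3 p4)).prod := by
        apply Finset.sum_le_sum_of_subset_of_nonneg
        · intro y hy
          rw [Finset.mem_filter] at hy
          obtain ⟨yf, hyf⟩ := list_eq_ofFn y hy.2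
          rw [Finset.mem_image]
          exact ⟨yf, Finset.mem_univ yf, hyf.symm⟩
        · intro y _ _
          exact hnn y
    _ = ∑ g : Fin n → Bool, ∏ i, qfun p1 p2 p3 p4 (g i, wf i) := by
        rw [Finset.sum_image (fun a _ b _ hab => List.ofFn_injective hab)]
        apply Finset.sum_congr rfl
        intro g _
        rw [zip_ofFn, List.map_ofFn, List.prod_ofFn]
        rfl
    _ = ∏ i, ∑ κ : Bool, qfun p1 p2 p3 p4 (κ, wf i) := by
        rw [Finset.prod_univ_sum (fun _ => (Finset.univ : Finset Bool))
          (fun i κ => qfun p1 p2 p3 p4 (κ, wf i)), Fintype.piFinset_univ]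
    _ ≤ 1 := by
        apply Finset.prod_le_one
        · intro i _
          apply Finset.sum_nonneg
          intro κ _
          exact qfun_nonneg h1 h2 h3 h4 (κ, wf i)
        · intro i _
          rw [Fintype.sum_bool]
          exact qfun_pair_le_one h1 h2 h3 h4 (wf i)

include h1 h2 h3 h4 in
lemma QQDef_le_one (v : List (Bool × Bool)) :
    ∑ x ∈ Finset.univ.image X, QQDef μ X Y p1 p2 p3 p4 x v ≤ 1 := by
  classical
  unfold QQDef
  rw [Finset.sum_comm]
  have hPcSum : ∀ y ∈ Finset.univ.image Y,
      (∑ x ∈ Finset.univ.image X, PcDef μ X Y x y) * QpDef p1 p2 p3 p4 y v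
        ≤ QpDef p1 p2 p3 p4 y v := by
    intro y _
    have hle : ∑ x ∈ Finset.univ.image X, PcDef μ X Y x y ≤ 1 := by
      unfold PcDef
      rw [← Finset.sum_div]
      rcases lt_or_eq_of_le (pr_nonneg μ (fun ω => Y ω = y)) with hp | hp
      · rw [← pr_decomp μ X Y y, div_self (ne_of_gt hp)]
      · rw [← hp, div_zero]
        norm_num
    have h0 : 0 ≤ ∑ x ∈ Finset.univ.image X, PcDef μ X Y x y :=
      Finset.sum_nonneg fun x _ => PcDef_nonneg μ X Y x y
    nlinarith [QpDef_nonneg p1 p2 p3 p4 h1 h2 h3 h4 y v]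
  calc ∑ y ∈ Finset.univ.image Y, ∑ x ∈ Finset.univ.image X,
        PcDef μ X Y x y * QpDef p1 p2 p3 p4 y v
      = ∑ y ∈ Finset.univ.image Y,
        (∑ x ∈ Finset.univ.image X, PcDef μ X Y x y) * QpDef p1 p2 p3 p4 y v := by
        apply Finset.sum_congr rfl
        intro y _
        rw [Finset.sum_mul]
    _ ≤ ∑ y ∈ Finset.univ.image Y, QpDef p1 p2 p3 p4 y v := Finset.sum_le_sum hPcSum
    _ ≤ 1 := by
        obtain ⟨n, hn⟩ : ∃ n, v.length = n := ⟨_, rfl⟩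
        obtain ⟨wf, hwf⟩ := list_eq_ofFn v hn
        calc ∑ y ∈ Finset.univ.image Y, QpDef p1 p2 p3 p4 y v
            = ∑ y ∈ (Finset.univ.image Y).filter (fun y => y.length = n),
                ((y.zip (List.ofFn wf)).map (qfun p1 p2 p3 p4)).prod := by
              rw [Finset.sum_filter]
              apply Finset.sum_congr rfl
              intro y _
              show QpDef p1 p2 p3 p4 y v = _
              unfold QpDef
              rw [hwf, List.length_ofFn]
          _ ≤ 1 := Qp_sum_le_one p1 p2 p3 p4 h1 h2 h3 h4 n wf _

end Main
section Main2

variable {S : Type*} (μ : FinProb Ω) (p1 p2 p3 p4 : ℝ)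
  (X : Ω → S) (Y : Ω → List Bool) (Y4 : Ω → List (Bool × Bool))

variable (h1 : 0 ≤ p1) (h2 : 0 ≤ p2) (h3 : 0 ≤ p3) (h4 : 0 ≤ p4)
  (hsum : p1 + p2 + p3 + p4 = 1)
  (hlen : ∀ ω, (Y4 ω).length = (Y ω).length)
  (hcond : ∀ (x : S) (n : ℕ) (y : Fin n → Bool) (y' : Fin n → Bool × Bool),
      0 < pr μ (fun ω => X ω = x ∧ Y ω = List.ofFn y) →
      pr μ (fun ω => Y4 ω = List.ofFn y' ∧ X ω = x ∧ Y ω = List.ofFn y) /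
        pr μ (fun ω => X ω = x ∧ Y ω = List.ofFn y) = ∏ i, quatKernel p1 p2 p3 p4 (y i) (y' i))

include h1 h2 h3 h4 hlen hcond in
lemma support_qfun_pos (ω : Ω) (hω : 0 < μ.p ω) :
    ∀ a ∈ (Y ω).zip (Y4 ω), 0 < qfun p1 p2 p3 p4 a := by
  obtain ⟨yf, hyf⟩ := list_eq_ofFn (Y ω) (n := (Y ω).length) rfl
  obtain ⟨vf, hvf⟩ := list_eq_ofFn (Y4 ω) (hlen ω)
  have hpxy : 0 < pr μ (fun ω' => X ω' = X ω ∧ Y ω' = List.ofFn yf) :=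
    pr_pos_of μ ω hω ⟨rfl, hyf ▸ rfl⟩
  have hc := hcond (X ω) _ yf vf hpxy
  have hnum : 0 < pr μ (fun ω' => Y4 ω' = List.ofFn vf ∧ X ω' = X ω ∧ Y ω' = List.ofFn yf) :=
    pr_pos_of μ ω hω ⟨hvf ▸ rfl, rfl, hyf ▸ rfl⟩
  have hprod : 0 < ∏ i, quatKernel p1 p2 p3 p4 (yf i) (vf i) := by
    rw [← hc]
    exact div_pos hnum hpxy
  have hfac : ∀ i, 0 < quatKernel p1 p2 p3 p4 (yf i) (vf i) := by
    intro i
    rcases lt_or_eq_of_le (quat_nonneg h1 h2 h3 h4 (yf i) (vf i)) with h | h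
    · exact h
    · exfalso
      rw [Finset.prod_eq_zero (Finset.mem_univ i) h.symm] at hprod
      exact lt_irrefl 0 hprod
  intro a ha
  rw [hyf, hvf, zip_ofFn, List.mem_ofFn] at ha
  obtain ⟨i, hi⟩ := ha
  rw [← hi]
  unfold qfun
  apply div_pos
  · exact hfac i
  · show 0 < colsum p1 p2 p3 p4 (vf i)
    have hq := hfac i
    have ht := quat_nonneg h1 h2 h3 h4 true (vf i)
    have hf := quat_nonneg h1 h2 h3 h4 false (vf i)
    unfold colsum
    cases hb : yf i
    · rw [hb] at hq; linarith
    · rw [hb] at hq; linarith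

include h1 h2 h3 h4 hlen hcond in
lemma QpDef_pos (ω : Ω) (hω : 0 < μ.p ω) :
    0 < QpDef p1 p2 p3 p4 (Y ω) (Y4 ω) := by
  unfold QpDef
  rw [if_pos (hlen ω).symm]
  apply List.prod_pos
  intro a ha
  rw [List.mem_map] at ha
  obtain ⟨c, hc, rfl⟩ := ha
  exact support_qfun_pos μ p1 p2 p3 p4 X Y Y4 h1 h2 h3 h4 hlen hcond ω hω c hc

lemma PcDef_pos (ω : Ω) (hω : 0 < μ.p ω) : 0 < PcDef μ X Y (X ω) (Y ω) := by
  unfold PcDef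
  apply div_pos
  · exact pr_pos_of μ ω hω ⟨rfl, rfl⟩
  · exact pr_pos_of μ ω hω rfl

include h1 h2 h3 h4 hlen hcond in
lemma QQDef_pos (ω : Ω) (hω : 0 < μ.p ω) :
    0 < QQDef μ X Y p1 p2 p3 p4 (X ω) (Y4 ω) := by
  have hge : PcDef μ X Y (X ω) (Y ω) * QpDef p1 p2 p3 p4 (Y ω) (Y4 ω)
      ≤ QQDef μ X Y p1 p2 p3 p4 (X ω) (Y4 ω) := by
    unfold QQDef
    apply Finset.single_le_sum (f := fun y => PcDef μ X Y (X ω) y * QpDef p1 p2 p3 p4 y (Y4 ω))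
    · intro y _
      exact mul_nonneg (PcDef_nonneg μ X Y _ _) (QpDef_nonneg p1 p2 p3 p4 h1 h2 h3 h4 _ _)
    · exact Finset.mem_image_of_mem Y (Finset.mem_univ ω)
  have := mul_pos (PcDef_pos μ X Y ω hω)
    (QpDef_pos μ p1 p2 p3 p4 X Y Y4 h1 h2 h3 h4 hlen hcond ω hω)
  linarith

end Main2
section Main3

variable (p1 p2 p3 p4 : ℝ)

lemma marginal (hsum : p1 + p2 + p3 + p4 = 1) (b : Bool) (k : Bool × Bool)
    (n : ℕ) (yf : Fin n → Bool) :
    ∑ y' : Fin n → Bool × Bool,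
      (∏ i, quatKernel p1 p2 p3 p4 (yf i) (y' i)) *
        (∑ i, (if (yf i, y' i) = (b, k) then (1:ℝ) else 0))
    = (∑ i, (if yf i = b then (1:ℝ) else 0)) * quatKernel p1 p2 p3 p4 b k := by
  classical
  have hswap : ∑ y' : Fin n → Bool × Bool,
      (∏ i, quatKernel p1 p2 p3 p4 (yf i) (y' i)) *
        (∑ i, (if (yf i, y' i) = (b, k) then (1:ℝ) else 0))
      = ∑ i : Fin n, ∑ y' : Fin n → Bool × Bool,
          (∏ j, quatKernel p1 p2 p3 p4 (yf j) (y' j)) *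
            (if (yf i, y' i) = (b, k) then (1:ℝ) else 0) := by
    rw [Finset.sum_comm]
    apply Finset.sum_congr rfl
    intro y' _
    rw [Finset.mul_sum]
  rw [hswap]
  have hsingle : ∀ i : Fin n,
      ∑ y' : Fin n → Bool × Bool,
        (∏ j, quatKernel p1 p2 p3 p4 (yf j) (y' j)) *
          (if (yf i, y' i) = (b, k) then (1:ℝ) else 0)
      = (if yf i = b then (1:ℝ) else 0) * quatKernel p1 p2 p3 p4 b k := by
    intro i
    set F : Fin n → Bool × Bool → ℝ := fun j κ =>
      if j = i then quatKernel p1 p2 p3 p4 (yf j) κ * (if (yf j, κ) = (b, k) then (1:ℝ) else 0)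
      else quatKernel p1 p2 p3 p4 (yf j) κ with hF
    have step1 : ∀ y' : Fin n → Bool × Bool,
        (∏ j, quatKernel p1 p2 p3 p4 (yf j) (y' j)) *
          (if (yf i, y' i) = (b, k) then (1:ℝ) else 0) = ∏ j, F j (y' j) := by
      intro y'
      rw [← Finset.prod_erase_mul Finset.univ _ (Finset.mem_univ i),
        ← Finset.prod_erase_mul Finset.univ (fun j => F j (y' j)) (Finset.mem_univ i)]
      have He : ∏ j ∈ Finset.univ.erase i, F j (y' j)
          = ∏ j ∈ Finset.univ.erase i, quatKernel p1 p2 p3 p4 (yf j) (y' j) := by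
        apply Finset.prod_congr rfl
        intro j hj
        rw [hF]
        simp only []
        rw [if_neg (Finset.ne_of_mem_erase hj)]
      rw [He]
      have hFi : F i (y' i) = quatKernel p1 p2 p3 p4 (yf i) (y' i) *
          (if (yf i, y' i) = (b, k) then (1:ℝ) else 0) := by
        simp [hF]
      rw [hFi]
      ring
    calc ∑ y' : Fin n → Bool × Bool,
        (∏ j, quatKernel p1 p2 p3 p4 (yf j) (y' j)) *
          (if (yf i, y' i) = (b, k) then (1:ℝ) else 0)
        = ∑ y' : Fin n → Bool × Bool, ∏ j, F j (y' j) :=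
          Finset.sum_congr rfl (fun y' _ => step1 y')
      _ = ∏ j, ∑ κ : Bool × Bool, F j κ := by
          rw [Finset.prod_univ_sum (fun _ => (Finset.univ : Finset (Bool × Bool))) F,
            Fintype.piFinset_univ]
      _ = (if yf i = b then (1:ℝ) else 0) * quatKernel p1 p2 p3 p4 b k := by
          rw [Finset.prod_eq_single i]
          · -- the i-th factor
            by_cases hb : yf i = b
            · have hterm : ∀ κ : Bool × Bool, F i κ =
                  if κ = k then quatKernel p1 p2 p3 p4 b k else 0 := by
                intro κ
                by_cases hk : κ = k
                · simp [hF, hb, hk]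
                · simp [hF, hk, Prod.mk.injEq]
              rw [Finset.sum_congr rfl (fun κ _ => hterm κ)]
              rw [Finset.sum_ite_eq' Finset.univ k
                (fun _ => quatKernel p1 p2 p3 p4 b k)]
              simp [hb]
            · have hterm : ∀ κ : Bool × Bool, F i κ = 0 := by
                intro κ
                simp [hF, Prod.mk.injEq, hb]
              rw [Finset.sum_congr rfl (fun κ _ => hterm κ)]
              simp [hb]
          · -- other factors are 1
            intro j _ hj
            have : ∑ κ : Bool × Bool, F j κ = ∑ κ : Bool × Bool,
                quatKernel p1 p2 p3 p4 (yf j) κ := by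
              apply Finset.sum_congr rfl
              intro κ _
              rw [hF]
              simp only []
              rw [if_neg hj]
            rw [this, quat_row_sum hsum]
          · intro h
            exact absurd (Finset.mem_univ i) h
  rw [Finset.sum_congr rfl (fun i _ => hsingle i), ← Finset.sum_mul]

end Main3
section Main4

variable {S : Type*} (μ : FinProb Ω) (p1 p2 p3 p4 : ℝ)
  (X : Ω → S) (Y : Ω → List Bool) (Y4 : Ω → List (Bool × Bool))

variable (hsum : p1 + p2 + p3 + p4 = 1)
  (hlen : ∀ ω, (Y4 ω).length = (Y ω).length)
  (hcond : ∀ (x : S) (n : ℕ) (y : Fin n → Bool) (y' : Fin n → Bool × Bool),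
      0 < pr μ (fun ω => X ω = x ∧ Y ω = List.ofFn y) →
      pr μ (fun ω => Y4 ω = List.ofFn y' ∧ X ω = x ∧ Y ω = List.ofFn y) /
        pr μ (fun ω => X ω = x ∧ Y ω = List.ofFn y) = ∏ i, quatKernel p1 p2 p3 p4 (y i) (y' i))

lemma pr_zero_support {E : Ω → Prop} (h : pr μ E = 0) (ω : Ω) (hE : E ω) : μ.p ω = 0 := by
  rcases lt_or_eq_of_le (μ.nonneg ω) with hp | hp
  · exfalso
    have := pr_pos_of μ ω hp hE
    rw [h] at this
    exact lt_irrefl 0 this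
  · exact hp.symm

include hsum hlen hcond in
lemma count_claim (b : Bool) (k : Bool × Bool) (x : S) (y : List Bool) :
    (∑ ω, if X ω = x ∧ Y ω = y
      then μ.p ω * (((Y ω).zip (Y4 ω)).map (fun a => if a = (b, k) then (1:ℝ) else 0)).sum
      else 0)
    = pr μ (fun ω => X ω = x ∧ Y ω = y) *
        ((y.map (fun a => if a = b then (1:ℝ) else 0)).sum * quatKernel p1 p2 p3 p4 b k) := by
  classical
  by_cases hpos : 0 < pr μ (fun ω => X ω = x ∧ Y ω = y)
  case neg =>
    have hz : pr μ (fun ω => X ω = x ∧ Y ω = y) = 0 := by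
      rcases lt_or_eq_of_le (pr_nonneg μ (fun ω => X ω = x ∧ Y ω = y)) with h | h
      · exact absurd h hpos
      · exact h.symm
    rw [hz, zero_mul]
    apply Finset.sum_eq_zero
    intro ω _
    by_cases hE : X ω = x ∧ Y ω = y
    · rw [if_pos hE, pr_zero_support μ hz ω hE, zero_mul]
    · rw [if_neg hE]
  case pos =>
    obtain ⟨n, hn⟩ : ∃ n, y.length = n := ⟨_, rfl⟩
    obtain ⟨yf, hyf⟩ := list_eq_ofFn y hn
    have expand : ∀ ω, (if X ω = x ∧ Y ω = y
        then μ.p ω * (((Y ω).zip (Y4 ω)).map (fun a => if a = (b, k) then (1:ℝ) else 0)).sum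
        else 0)
      = ∑ y' : Fin n → Bool × Bool,
          (if Y4 ω = List.ofFn y' ∧ X ω = x ∧ Y ω = y then μ.p ω else 0) *
            ((y.zip (List.ofFn y')).map (fun a => if a = (b, k) then (1:ℝ) else 0)).sum := by
      intro ω
      by_cases hxyω : X ω = x ∧ Y ω = y
      · rw [if_pos hxyω]
        have hlen4 : (Y4 ω).length = n := by rw [hlen ω, hxyω.2]; exact hn
        obtain ⟨vf, hvf⟩ := list_eq_ofFn (Y4 ω) hlen4
        rw [Finset.sum_eq_single vf]
        · rw [if_pos ⟨hvf, hxyω.1, hxyω.2⟩, hxyω.2, hvf]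
        · intro g _ hg
          rw [if_neg (fun hcon => hg (List.ofFn_injective (hcon.1.symm.trans hvf))), zero_mul]
        · intro h
          exact absurd (Finset.mem_univ vf) h
      · rw [if_neg hxyω]
        symm
        apply Finset.sum_eq_zero
        intro g _
        rw [if_neg (fun hcon => hxyω ⟨hcon.2.1, hcon.2.2⟩), zero_mul]
    rw [Finset.sum_congr rfl (fun ω _ => expand ω), Finset.sum_comm]
    have step2 : ∀ y' : Fin n → Bool × Bool,
        (∑ ω, (if Y4 ω = List.ofFn y' ∧ X ω = x ∧ Y ω = y then μ.p ω else 0) *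
          ((y.zip (List.ofFn y')).map (fun a => if a = (b, k) then (1:ℝ) else 0)).sum)
        = (pr μ (fun ω => X ω = x ∧ Y ω = y) * ∏ i, quatKernel p1 p2 p3 p4 (yf i) (y' i)) *
            (∑ i, (if (yf i, y' i) = (b, k) then (1:ℝ) else 0)) := by
      intro y'
      have hc := hcond x n yf y'
      rw [← hyf] at hc
      have hpr : pr μ (fun ω => Y4 ω = List.ofFn y' ∧ X ω = x ∧ Y ω = y)
          = (∏ i, quatKernel p1 p2 p3 p4 (yf i) (y' i)) * pr μ (fun ω => X ω = x ∧ Y ω = y) :=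
        (div_eq_iff (ne_of_gt hpos)).mp (hc hpos)
      have hzcc : ((y.zip (List.ofFn y')).map (fun a => if a = (b, k) then (1:ℝ) else 0)).sum
          = ∑ i, (if (yf i, y' i) = (b, k) then (1:ℝ) else 0) := by
        rw [hyf, zip_ofFn, List.map_ofFn, List.sum_ofFn]
        rfl
      rw [← Finset.sum_mul, hzcc]
      have hprsum : (∑ ω, if Y4 ω = List.ofFn y' ∧ X ω = x ∧ Y ω = y then μ.p ω else 0)
          = pr μ (fun ω => Y4 ω = List.ofFn y' ∧ X ω = x ∧ Y ω = y) := by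
        unfold pr
        apply Finset.sum_congr rfl
        intro ω _
        congr 1
      rw [hprsum, hpr]
      ring
    rw [Finset.sum_congr rfl (fun y' _ => step2 y')]
    have hyb : (y.map (fun a => if a = b then (1:ℝ) else 0)).sum
        = ∑ i, (if yf i = b then (1:ℝ) else 0) := by
      rw [hyf, List.map_ofFn, List.sum_ofFn]
      rfl
    calc ∑ y' : Fin n → Bool × Bool,
        (pr μ (fun ω => X ω = x ∧ Y ω = y) * ∏ i, quatKernel p1 p2 p3 p4 (yf i) (y' i)) *
          (∑ i, (if (yf i, y' i) = (b, k) then (1:ℝ) else 0))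
        = pr μ (fun ω => X ω = x ∧ Y ω = y) *
            ∑ y' : Fin n → Bool × Bool,
              (∏ i, quatKernel p1 p2 p3 p4 (yf i) (y' i)) *
                (∑ i, (if (yf i, y' i) = (b, k) then (1:ℝ) else 0)) := by
          rw [Finset.mul_sum]
          apply Finset.sum_congr rfl
          intro y' _
          ring
      _ = pr μ (fun ω => X ω = x ∧ Y ω = y) *
            ((∑ i, (if yf i = b then (1:ℝ) else 0)) * quatKernel p1 p2 p3 p4 b k) := by
          rw [marginal p1 p2 p3 p4 hsum b k n yf]
      _ = pr μ (fun ω => X ω = x ∧ Y ω = y) *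
            ((y.map (fun a => if a = b then (1:ℝ) else 0)).sum
              * quatKernel p1 p2 p3 p4 b k) := by
          rw [hyb]

include hsum hlen hcond in
lemma count_eq (b : Bool) (k : Bool × Bool) :
    ∑ ω, μ.p ω * (((Y ω).zip (Y4 ω)).map (fun a => if a = (b, k) then (1:ℝ) else 0)).sum
    = (∑ ω, μ.p ω * ((Y ω).map (fun a => if a = b then (1:ℝ) else 0)).sum)
        * quatKernel p1 p2 p3 p4 b k := by
  have hgrp := grp μ (fun ω => (X ω, Y ω))
    (fun xy => (xy.2.map (fun a => if a = b then (1:ℝ) else 0)).sum * quatKernel p1 p2 p3 p4 b k)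
  refine Eq.trans (sum_partition_pr μ (fun ω => (X ω, Y ω)) _
    (fun xy => (xy.2.map (fun a => if a = b then (1:ℝ) else 0)).sum
      * quatKernel p1 p2 p3 p4 b k) ?_) ?_
  · intro xy
    refine Eq.trans (Finset.sum_congr rfl (fun ω _ => ?_))
      ((count_claim μ p1 p2 p3 p4 X Y Y4 hsum hlen hcond b k xy.1 xy.2).trans ?_)
    · exact @if_congr _ _ _ (Classical.propDecidable _) _ _ _ _ _ (by simp [Prod.ext_iff]) rfl rfl
    · rw [pr_congr μ (E := fun ω => X ω = xy.1 ∧ Y ω = xy.2)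
        (F := fun ω => (X ω, Y ω) = xy) (fun ω => by simp [Prod.ext_iff])]
  · rw [← hgrp, Finset.sum_mul]
    apply Finset.sum_congr rfl
    intro ω _
    ring

end Main4

/-- for the binary input symmetric quaternary output kernel,
`I(X;Y⁽⁴⁾) ≥ I(X;Y) − E[|Y|]·[H(p1,p2,p3,p4) + log₂((p1+p3)² + (p2+p4)²)]`. -/
theorem stmt14 {Ω S : Type*} [Fintype Ω] (μ : FinProb Ω)
    (p1 p2 p3 p4 : ℝ)
    (h1 : 0 ≤ p1) (h2 : 0 ≤ p2) (h3 : 0 ≤ p3) (h4 : 0 ≤ p4)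
    (hsum : p1 + p2 + p3 + p4 = 1)
    (X : Ω → S) (Y : Ω → List Bool) (Y4 : Ω → List (Bool × Bool))
    (hlen : ∀ ω, (Y4 ω).length = (Y ω).length)
    (hcond : ∀ (x : S) (n : ℕ) (y : Fin n → Bool) (y' : Fin n → Bool × Bool),
      0 < pr μ (fun ω => X ω = x ∧ Y ω = List.ofFn y) →
      pr μ (fun ω => Y4 ω = List.ofFn y' ∧ X ω = x ∧ Y ω = List.ofFn y) /
        pr μ (fun ω => X ω = x ∧ Y ω = List.ofFn y) = ∏ i, quatKernel p1 p2 p3 p4 (y i) (y' i)) :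
    mutualInfo μ X Y4 ≥ mutualInfo μ X Y -
      expLen μ Y * ((-(p1 * Real.logb 2 p1) - p2 * Real.logb 2 p2 -
          p3 * Real.logb 2 p3 - p4 * Real.logb 2 p4) +
        Real.logb 2 ((p1 + p3) ^ 2 + (p2 + p4) ^ 2)) := by
  have hgibbs := gibbs μ X Y4 (QQDef μ X Y p1 p2 p3 p4)
    (fun x v => QQDef_nonneg μ p1 p2 p3 p4 X Y h1 h2 h3 h4 x v)
    (fun v _ => QQDef_le_one μ p1 p2 p3 p4 X Y h1 h2 h3 h4 v)
    (fun ω hω => QQDef_pos μ p1 p2 p3 p4 X Y Y4 h1 h2 h3 h4 hlen hcond ω hω)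
  -- pointwise bound on the Gibbs cost
  have hpoint : ∑ ω, μ.p ω * (-Real.logb 2 (QQDef μ X Y p1 p2 p3 p4 (X ω) (Y4 ω)))
      ≤ ∑ ω, μ.p ω * ((-Real.logb 2 (PcDef μ X Y (X ω) (Y ω)))
          + (((Y ω).zip (Y4 ω)).map (fun a => -Real.logb 2 (qfun p1 p2 p3 p4 a))).sum) := by
    apply Finset.sum_le_sum
    intro ω _
    rcases lt_or_eq_of_le (μ.nonneg ω) with hω | hω
    · apply mul_le_mul_of_nonneg_left _ (le_of_lt hω)
      have hPc := PcDef_pos μ X Y ω hω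
      have hQp := QpDef_pos μ p1 p2 p3 p4 X Y Y4 h1 h2 h3 h4 hlen hcond ω hω
      have hQQpos := QQDef_pos μ p1 p2 p3 p4 X Y Y4 h1 h2 h3 h4 hlen hcond ω hω
      have hQQge : PcDef μ X Y (X ω) (Y ω) * QpDef p1 p2 p3 p4 (Y ω) (Y4 ω)
          ≤ QQDef μ X Y p1 p2 p3 p4 (X ω) (Y4 ω) := by
        unfold QQDef
        apply Finset.single_le_sum
          (f := fun y => PcDef μ X Y (X ω) y * QpDef p1 p2 p3 p4 y (Y4 ω))
        · intro y _
          exact mul_nonneg (PcDef_nonneg μ X Y _ _)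
            (QpDef_nonneg p1 p2 p3 p4 h1 h2 h3 h4 _ _)
        · exact Finset.mem_image_of_mem Y (Finset.mem_univ ω)
      have hmono : -Real.logb 2 (QQDef μ X Y p1 p2 p3 p4 (X ω) (Y4 ω))
          ≤ -Real.logb 2 (PcDef μ X Y (X ω) (Y ω) * QpDef p1 p2 p3 p4 (Y ω) (Y4 ω)) := by
        apply neg_le_neg
        exact (Real.logb_le_logb (by norm_num) (mul_pos hPc hQp) hQQpos).mpr hQQge
      have hsplit : Real.logb 2 (PcDef μ X Y (X ω) (Y ω) * QpDef p1 p2 p3 p4 (Y ω) (Y4 ω))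
          = Real.logb 2 (PcDef μ X Y (X ω) (Y ω))
            + Real.logb 2 (QpDef p1 p2 p3 p4 (Y ω) (Y4 ω)) :=
        Real.logb_mul (ne_of_gt hPc) (ne_of_gt hQp)
      have hQp_eq : QpDef p1 p2 p3 p4 (Y ω) (Y4 ω)
          = (((Y ω).zip (Y4 ω)).map (qfun p1 p2 p3 p4)).prod := by
        unfold QpDef
        rw [if_pos (hlen ω).symm]
      have hlogprod : Real.logb 2 ((((Y ω).zip (Y4 ω)).map (qfun p1 p2 p3 p4)).prod)
          = ((((Y ω).zip (Y4 ω)).map (qfun p1 p2 p3 p4)).map (Real.logb 2)).sum := by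
        apply list_logb_prod
        intro x hx
        rw [List.mem_map] at hx
        obtain ⟨c, hc, rfl⟩ := hx
        exact support_qfun_pos μ p1 p2 p3 p4 X Y Y4 h1 h2 h3 h4 hlen hcond ω hω c hc
      have hmapmap : ((((Y ω).zip (Y4 ω)).map (qfun p1 p2 p3 p4)).map (Real.logb 2)).sum
          = (((Y ω).zip (Y4 ω)).map (fun a => Real.logb 2 (qfun p1 p2 p3 p4 a))).sum := by
        rw [List.map_map]
        rfl
      have hneg : (((Y ω).zip (Y4 ω)).map (fun a => -Real.logb 2 (qfun p1 p2 p3 p4 a))).sum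
          = -((((Y ω).zip (Y4 ω)).map (fun a => Real.logb 2 (qfun p1 p2 p3 p4 a))).sum) :=
        list_sum_neg _ _
      rw [hQp_eq] at hsplit hmono
      linarith [hmono, hsplit, hlogprod, hmapmap, hneg]
    · rw [← hω, zero_mul, zero_mul]
  -- split the right-hand sum
  have hsplit2 : ∑ ω, μ.p ω * ((-Real.logb 2 (PcDef μ X Y (X ω) (Y ω)))
          + (((Y ω).zip (Y4 ω)).map (fun a => -Real.logb 2 (qfun p1 p2 p3 p4 a))).sum)
      = (∑ ω, μ.p ω * (-Real.logb 2 (PcDef μ X Y (X ω) (Y ω))))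
        + ∑ ω, μ.p ω *
            (((Y ω).zip (Y4 ω)).map (fun a => -Real.logb 2 (qfun p1 p2 p3 p4 a))).sum := by
    rw [← Finset.sum_add_distrib]
    apply Finset.sum_congr rfl
    intro ω _
    ring
  -- identify the first piece with condEntropy μ X Y
  have hEQ : ∑ ω, μ.p ω * (-Real.logb 2 (PcDef μ X Y (X ω) (Y ω))) = condEntropy μ X Y := by
    unfold PcDef
    exact (condEntropy_eq_sum μ X Y).symm
  -- counting: evaluate the second piece
  have hcount : ∑ ω, μ.p ω *
        (((Y ω).zip (Y4 ω)).map (fun a => -Real.logb 2 (qfun p1 p2 p3 p4 a))).sum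
      = expLen μ Y * ((-(p1 * Real.logb 2 p1) - p2 * Real.logb 2 p2 -
          p3 * Real.logb 2 p3 - p4 * Real.logb 2 p4)
        + ((p1 + p3) * Real.logb 2 (p1 + p3) + (p2 + p4) * Real.logb 2 (p2 + p4))) := by
    calc ∑ ω, μ.p ω *
          (((Y ω).zip (Y4 ω)).map (fun a => -Real.logb 2 (qfun p1 p2 p3 p4 a))).sum
        = ∑ ω, ∑ a : Bool × (Bool × Bool), μ.p ω *
            ((((Y ω).zip (Y4 ω)).map (fun p => if p = a then (1:ℝ) else 0)).sum *
              (-Real.logb 2 (qfun p1 p2 p3 p4 a))) := by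
          apply Finset.sum_congr rfl
          intro ω _
          rw [list_sum_map_eq (((Y ω).zip (Y4 ω))) (fun a => -Real.logb 2 (qfun p1 p2 p3 p4 a)),
            Finset.mul_sum]
      _ = ∑ a : Bool × (Bool × Bool), ∑ ω, μ.p ω *
            ((((Y ω).zip (Y4 ω)).map (fun p => if p = a then (1:ℝ) else 0)).sum *
              (-Real.logb 2 (qfun p1 p2 p3 p4 a))) := Finset.sum_comm
      _ = ∑ a : Bool × (Bool × Bool),
            (∑ ω, μ.p ω * (((Y ω).zip (Y4 ω)).map (fun p => if p = a then (1:ℝ) else 0)).sum) *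
              (-Real.logb 2 (qfun p1 p2 p3 p4 a)) := by
          apply Finset.sum_congr rfl
          intro a _
          rw [Finset.sum_mul]
          apply Finset.sum_congr rfl
          intro ω _
          ring
      _ = ∑ b : Bool, ∑ k : Bool × Bool,
            (∑ ω, μ.p ω * (((Y ω).zip (Y4 ω)).map (fun p => if p = (b, k) then (1:ℝ) else 0)).sum) *
              (-Real.logb 2 (qfun p1 p2 p3 p4 (b, k))) :=
        Fintype.sum_prod_type _
      _ = ∑ b : Bool, ∑ k : Bool × Bool,
            ((∑ ω, μ.p ω * ((Y ω).map (fun a => if a = b then (1:ℝ) else 0)).sum)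
              * quatKernel p1 p2 p3 p4 b k) *
              (-Real.logb 2 (qfun p1 p2 p3 p4 (b, k))) := by
          apply Finset.sum_congr rfl
          intro b _
          apply Finset.sum_congr rfl
          intro k _
          rw [count_eq μ p1 p2 p3 p4 X Y Y4 hsum hlen hcond b k]
      _ = ∑ b : Bool,
            (∑ ω, μ.p ω * ((Y ω).map (fun a => if a = b then (1:ℝ) else 0)).sum) *
              ∑ k : Bool × Bool, quatKernel p1 p2 p3 p4 b k *
                (-Real.logb 2 (qfun p1 p2 p3 p4 (b, k))) := by
          apply Finset.sum_congr rfl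
          intro b _
          rw [Finset.mul_sum]
          apply Finset.sum_congr rfl
          intro k _
          ring
      _ = ∑ b : Bool,
            (∑ ω, μ.p ω * ((Y ω).map (fun a => if a = b then (1:ℝ) else 0)).sum) *
              ((-(p1 * Real.logb 2 p1) - p2 * Real.logb 2 p2 - p3 * Real.logb 2 p3
                  - p4 * Real.logb 2 p4)
                + ((p1 + p3) * Real.logb 2 (p1 + p3) + (p2 + p4) * Real.logb 2 (p2 + p4))) := by
          apply Finset.sum_congr rfl
          intro b _
          rw [quat_D h1 h2 h3 h4 b]
      _ = ((∑ ω, μ.p ω * ((Y ω).map (fun a => if a = true then (1:ℝ) else 0)).sum)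
            + (∑ ω, μ.p ω * ((Y ω).map (fun a => if a = false then (1:ℝ) else 0)).sum)) *
              ((-(p1 * Real.logb 2 p1) - p2 * Real.logb 2 p2 - p3 * Real.logb 2 p3
                  - p4 * Real.logb 2 p4)
                + ((p1 + p3) * Real.logb 2 (p1 + p3) + (p2 + p4) * Real.logb 2 (p2 + p4))) := by
          rw [Fintype.sum_bool]
          ring
      _ = expLen μ Y * ((-(p1 * Real.logb 2 p1) - p2 * Real.logb 2 p2 - p3 * Real.logb 2 p3
                  - p4 * Real.logb 2 p4)
                + ((p1 + p3) * Real.logb 2 (p1 + p3) + (p2 + p4) * Real.logb 2 (p2 + p4))) := by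
          congr 1
          rw [← Finset.sum_add_distrib]
          unfold expLen
          apply Finset.sum_congr rfl
          intro ω _
          rw [← mul_add]
          congr 1
          rw [add_comm]
          exact bool_count (Y ω)
  -- final numeric bound
  have hDle := quat_D_le h1 h2 h3 h4 hsum
  have hexp : 0 ≤ expLen μ Y := by
    apply Finset.sum_nonneg
    intro ω _
    exact mul_nonneg (μ.nonneg ω) (Nat.cast_nonneg _)
  have hfinal : expLen μ Y * ((-(p1 * Real.logb 2 p1) - p2 * Real.logb 2 p2 -
          p3 * Real.logb 2 p3 - p4 * Real.logb 2 p4)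
        + ((p1 + p3) * Real.logb 2 (p1 + p3) + (p2 + p4) * Real.logb 2 (p2 + p4)))
      ≤ expLen μ Y * ((-(p1 * Real.logb 2 p1) - p2 * Real.logb 2 p2 -
          p3 * Real.logb 2 p3 - p4 * Real.logb 2 p4)
        + Real.logb 2 ((p1 + p3) ^ 2 + (p2 + p4) ^ 2)) :=
    mul_le_mul_of_nonneg_left hDle hexp
  unfold mutualInfo
  have hchain : condEntropy μ X Y4 ≤ condEntropy μ X Y
      + expLen μ Y * ((-(p1 * Real.logb 2 p1) - p2 * Real.logb 2 p2 -
          p3 * Real.logb 2 p3 - p4 * Real.logb 2 p4)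
        + Real.logb 2 ((p1 + p3) ^ 2 + (p2 + p4) ^ 2)) := by
    calc condEntropy μ X Y4
        ≤ ∑ ω, μ.p ω * (-Real.logb 2 (QQDef μ X Y p1 p2 p3 p4 (X ω) (Y4 ω))) := hgibbs
      _ ≤ _ := hpoint
      _ = _ := hsplit2
      _ ≤ condEntropy μ X Y
          + expLen μ Y * ((-(p1 * Real.logb 2 p1) - p2 * Real.logb 2 p2 -
              p3 * Real.logb 2 p3 - p4 * Real.logb 2 p4)
            + Real.logb 2 ((p1 + p3) ^ 2 + (p2 + p4) ^ 2)) := by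
          rw [hEQ, hcount]
          linarith [hfinal]
  linarith [hchain]


end
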